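/- For all real numbers 0 < p < ∞ and 0 < q < ∞ and integers 0 ≤ l ≤ k with l < 1/q − 1/p, there exists a constant C = C(k, p, q) > 0 such that for every integer n ≥ k and every polynomial P ∈ Δ_n^{(k)}, one has ‖P^{(l)}‖_{L_q[−1,1]} ≤ C · ‖P‖_{L_p[−1,1]}. -/

import Mathlib

open Polynomial MeasureTheory


private lemma poly_ftc (P : Polynomial ℝ) (a b : ℝ) :
    ∫ x in a..b, (derivative P).eval x = P.eval b - P.eval a :=
  intervalIntegral.integral_eq_sub_of_hasDerivAt (fun x _ => P.hasDerivAt x)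
    ((P.derivative.continuous_aeval).intervalIntegrable _ _)

private lemma poly_mono {P : Polynomial ℝ}
    (h : ∀ x ∈ Set.Icc (-1:ℝ) 1, 0 ≤ (derivative P).eval x)
    {a b : ℝ} (ha : a ∈ Set.Icc (-1:ℝ) 1) (hb : b ∈ Set.Icc (-1:ℝ) 1) (hab : a ≤ b) :
    P.eval a ≤ P.eval b := by
  have h0 : 0 ≤ ∫ x in a..b, (derivative P).eval x :=
    intervalIntegral.integral_nonneg hab
      (fun x hx => h x ⟨le_trans ha.1 hx.1, le_trans hx.2 hb.2⟩)
  rw [poly_ftc] at h0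
  linarith

private lemma rpow_cont (f : ℝ → ℝ) (hf : Continuous f) (s : ℝ) (hs : 0 ≤ s) :
    Continuous fun x => |f x| ^ s :=
  hf.abs.rpow_const (fun x => Or.inr hs)

/-- pointwise bound `f_i(x) (1-x)^{i+1/p} ≤ c ‖P‖_p^… ` -/
private lemma ptwise (p : ℝ) (hp : 0 < p) (i : ℕ) :
    ∃ c : ℝ, 0 < c ∧ ∀ (k : ℕ), i + 1 ≤ k → ∀ P : Polynomial ℝ,
      (∀ m ≤ k, ∀ x ∈ Set.Icc (-1:ℝ) 1, 0 ≤ (derivative^[m] P).eval x) →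
      ∀ x ∈ Set.Icc (-1:ℝ) 1,
        (derivative^[i] P).eval x * (1 - x) ^ ((i:ℝ) + 1/p) ≤
          c * (∫ t in (-1:ℝ)..1, |P.eval t| ^ p) ^ (1/p) := by
  induction i with
  | zero =>
    refine ⟨1, one_pos, ?_⟩
    intro k hk P hP x hx
    have hP0 : ∀ y ∈ Set.Icc (-1:ℝ) 1, 0 ≤ P.eval y := by
      simpa using hP 0 (Nat.zero_le _)
    have hP1 : ∀ y ∈ Set.Icc (-1:ℝ) 1, 0 ≤ (derivative P).eval y := by
      have := hP 1 hk
      simpa using this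
    set Ip := ∫ t in (-1:ℝ)..1, |P.eval t| ^ p with hIp
    have hint : IntervalIntegrable (fun t => |P.eval t| ^ p) volume (-1) 1 :=
      (rpow_cont _ P.continuous_aeval p hp.le).intervalIntegrable _ _
    have hx1 : x ≤ 1 := hx.2
    have key : (P.eval x) ^ p * (1 - x) ≤ Ip := by
      have e1 : ∫ t in x..1, (P.eval x) ^ p = (P.eval x) ^ p * (1 - x) := by
        simp [mul_comm]
      have e2 : (∫ t in x..1, (P.eval x) ^ p) ≤ ∫ t in x..1, |P.eval t| ^ p := by
        apply intervalIntegral.integral_mono_on hx1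
          (intervalIntegrable_const) (hint.mono_set ?_)
        · intro t ht
          have htI : t ∈ Set.Icc (-1:ℝ) 1 := ⟨le_trans hx.1 ht.1, ht.2⟩
          rw [abs_of_nonneg (hP0 t htI)]
          exact Real.rpow_le_rpow (hP0 x hx) (poly_mono hP1 hx htI ht.1) hp.le
        · rw [Set.uIcc_of_le hx1, Set.uIcc_of_le (by norm_num : (-1:ℝ) ≤ 1)]
          exact Set.Icc_subset_Icc hx.1 le_rfl
      have e3 : (∫ t in x..1, |P.eval t| ^ p) ≤ Ip := by
        rw [hIp, ← intervalIntegral.integral_add_adjacent_intervals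
          (a := (-1:ℝ)) (b := x) (c := 1) (hint.mono_set ?_) (hint.mono_set ?_)]
        · have : 0 ≤ ∫ t in (-1:ℝ)..x, |P.eval t| ^ p :=
            intervalIntegral.integral_nonneg hx.1
              (fun t _ => Real.rpow_nonneg (abs_nonneg _) p)
          linarith
        · rw [Set.uIcc_of_le hx.1, Set.uIcc_of_le (by norm_num : (-1:ℝ) ≤ 1)]
          exact Set.Icc_subset_Icc le_rfl hx1
        · rw [Set.uIcc_of_le hx1, Set.uIcc_of_le (by norm_num : (-1:ℝ) ≤ 1)]
          exact Set.Icc_subset_Icc hx.1 le_rfl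
      calc (P.eval x) ^ p * (1 - x) = ∫ t in x..1, (P.eval x) ^ p := e1.symm
        _ ≤ ∫ t in x..1, |P.eval t| ^ p := e2
        _ ≤ Ip := e3
    -- now take p-th roots
    have hIp0 : 0 ≤ Ip :=
      intervalIntegral.integral_nonneg (by norm_num)
        (fun t _ => Real.rpow_nonneg (abs_nonneg _) p)
    have hx0 : 0 ≤ 1 - x := by linarith
    have hbase : 0 ≤ P.eval x * (1 - x) ^ ((0:ℝ) + 1/p) := by
      exact mul_nonneg (hP0 x hx) (Real.rpow_nonneg hx0 _)
    simp only [Function.iterate_zero, id_eq, Nat.cast_zero, zero_add, one_mul]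
    rw [← Real.rpow_le_rpow_iff (mul_nonneg (hP0 x hx) (Real.rpow_nonneg hx0 _))
        (Real.rpow_nonneg hIp0 _) hp,
      Real.mul_rpow (hP0 x hx) (Real.rpow_nonneg hx0 _),
      ← Real.rpow_mul hx0, ← Real.rpow_mul hIp0, one_div,
      inv_mul_cancel₀ hp.ne', Real.rpow_one, Real.rpow_one]
    exact key
  | succ i ih =>
    obtain ⟨c, hc, ihc⟩ := ih
    refine ⟨2 ^ ((i:ℝ) + 1 + 1/p) * c, by positivity, ?_⟩
    intro k hk P hP x hx
    have hN0 : 0 ≤ (∫ t in (-1:ℝ)..1, |P.eval t| ^ p) ^ (1/p) :=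
      Real.rpow_nonneg (intervalIntegral.integral_nonneg (by norm_num)
        (fun t _ => Real.rpow_nonneg (abs_nonneg _) p)) _
    have hcast : ((i+1 : ℕ):ℝ) + 1/p = (i:ℝ) + 1 + 1/p := by push_cast; ring
    rw [hcast]
    rcases eq_or_lt_of_le hx.2 with hx1 | hxlt
    · rw [← hx1]
      have : (1 - x) ^ ((i:ℝ) + 1 + 1/p) = 0 := by
        rw [hx1, sub_self, Real.zero_rpow (by positivity : (i:ℝ) + 1 + 1/p ≠ 0)]
      rw [hx1] at this ⊢
      rw [this, mul_zero]
      positivity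
    · set m := (x + 1) / 2 with hm
      have hxm : x ≤ m := by rw [hm]; linarith
      have hmI : m ∈ Set.Icc (-1:ℝ) 1 := ⟨by rw [hm]; linarith [hx.1], by rw [hm]; linarith⟩
      have h1m : 1 - m = (1 - x)/2 := by rw [hm]; ring
      have hfmono : ∀ a ∈ Set.Icc (-1:ℝ) 1, ∀ b ∈ Set.Icc (-1:ℝ) 1, a ≤ b →
          (derivative^[i+1] P).eval a ≤ (derivative^[i+1] P).eval b := by
        intro a ha b hb hab
        refine poly_mono (fun y hy => ?_) ha hb hab
        rw [← Function.iterate_succ_apply' derivative]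
        exact hP (i+2) hk y hy
      have hf0 : 0 ≤ (derivative^[i+1] P).eval x := hP (i+1) (le_trans (by omega) hk) x hx
      have step1 : (derivative^[i+1] P).eval x * (m - x) ≤
          ∫ t in x..m, (derivative^[i+1] P).eval t := by
        have := intervalIntegral.integral_mono_on hxm (intervalIntegrable_const (μ := volume))
          (((derivative^[i+1] P).continuous_aeval).intervalIntegrable _ _)
          (fun t ht => hfmono x hx t ⟨le_trans hx.1 ht.1, le_trans ht.2 hmI.2⟩ ht.1)
        simpa [mul_comm] using this
      have step2 : (∫ t in x..m, (derivative^[i+1] P).eval t) =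
          (derivative^[i] P).eval m - (derivative^[i] P).eval x := by
        rw [Function.iterate_succ_apply' derivative]
        exact poly_ftc _ x m
      have hg0 : 0 ≤ (derivative^[i] P).eval x := hP i (by omega) x hx
      have key : (derivative^[i+1] P).eval x * ((1-x)/2) ≤ (derivative^[i] P).eval m := by
        have := step1.trans_eq step2
        have h2 : m - x = (1-x)/2 := by rw [hm]; ring
        rw [h2] at this
        linarith
      have ihm := ihc k (by omega) P hP m hmI
      rw [h1m] at ihm
      have hu : (0:ℝ) < (1-x)/2 := by linarith
      set u := (1-x)/2 with hudef
      have expand : (1 - x) ^ ((i:ℝ) + 1 + 1/p) =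
          2 ^ ((i:ℝ) + 1 + 1/p) * (u * u ^ ((i:ℝ) + 1/p)) := by
        have h2x : (1 - x) = 2 * u := by rw [hudef]; ring
        rw [h2x, Real.mul_rpow (by norm_num) hu.le]
        congr 1
        rw [show (i:ℝ) + 1 + 1/p = 1 + ((i:ℝ) + 1/p) by ring,
          Real.rpow_add hu, Real.rpow_one]
      rw [expand]
      have : (derivative^[i+1] P).eval x * (u * u ^ ((i:ℝ) + 1/p)) ≤
          c * (∫ t in (-1:ℝ)..1, |P.eval t| ^ p) ^ (1/p) := by
        calc (derivative^[i+1] P).eval x * (u * u ^ ((i:ℝ) + 1/p))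
            = ((derivative^[i+1] P).eval x * u) * u ^ ((i:ℝ) + 1/p) := by ring
          _ ≤ (derivative^[i] P).eval m * u ^ ((i:ℝ) + 1/p) :=
              mul_le_mul_of_nonneg_right key (Real.rpow_nonneg hu.le _)
          _ ≤ c * (∫ t in (-1:ℝ)..1, |P.eval t| ^ p) ^ (1/p) := ihm
      calc (derivative^[i+1] P).eval x *
            (2 ^ ((i:ℝ) + 1 + 1/p) * (u * u ^ ((i:ℝ) + 1/p)))
          = 2 ^ ((i:ℝ) + 1 + 1/p) *
            ((derivative^[i+1] P).eval x * (u * u ^ ((i:ℝ) + 1/p))) := by ring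
        _ ≤ 2 ^ ((i:ℝ) + 1 + 1/p) * (c * (∫ t in (-1:ℝ)..1, |P.eval t| ^ p) ^ (1/p)) :=
            mul_le_mul_of_nonneg_left this (by positivity)
        _ = 2 ^ ((i:ℝ) + 1 + 1/p) * c * (∫ t in (-1:ℝ)..1, |P.eval t| ^ p) ^ (1/p) := by ring

private lemma rev_holder (F G : ℝ → ℝ) (r : ℝ) (hr0 : 0 < r) (hr1 : r < 1)
    (hFm : Measurable F) (hGm : Measurable G)
    (hF0 : ∀ x ∈ Set.Ioc (-1:ℝ) 1, 0 ≤ F x) (hG0 : ∀ x ∈ Set.Ioc (-1:ℝ) 1, 0 ≤ G x)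
    (hFi : IntervalIntegrable F volume (-1) 1) (hGi : IntervalIntegrable G volume (-1) 1) :
    ∫ x in (-1:ℝ)..1, F x ^ r * G x ^ (1-r) ≤
      (∫ x in (-1:ℝ)..1, F x) ^ r * (∫ x in (-1:ℝ)..1, G x) ^ (1-r) := by
  have h11 : (-1:ℝ) ≤ 1 := by norm_num
  rw [intervalIntegral.integral_of_le h11, intervalIntegral.integral_of_le h11,
      intervalIntegral.integral_of_le h11]
  set μ := volume.restrict (Set.Ioc (-1:ℝ) 1) with hμ
  have hmeas : MeasurableSet (Set.Ioc (-1:ℝ) 1) := measurableSet_Ioc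
  have hF0' : ∀ᵐ x ∂μ, 0 ≤ F x := (ae_restrict_iff' hmeas).2 (ae_of_all _ hF0)
  have hG0' : ∀ᵐ x ∂μ, 0 ≤ G x := (ae_restrict_iff' hmeas).2 (ae_of_all _ hG0)
  have hFG0' : ∀ᵐ x ∂μ, 0 ≤ F x ^ r * G x ^ (1-r) := by
    filter_upwards [hF0', hG0'] with x hF hG
    exact mul_nonneg (Real.rpow_nonneg hF _) (Real.rpow_nonneg hG _)
  have hFGm : Measurable fun x => F x ^ r * G x ^ (1-r) :=
    (hFm.pow measurable_const).mul (hGm.pow measurable_const)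
  -- rewrite as lintegrals
  rw [integral_eq_lintegral_of_nonneg_ae hFG0' hFGm.aestronglyMeasurable,
      integral_eq_lintegral_of_nonneg_ae hF0' hFm.aestronglyMeasurable,
      integral_eq_lintegral_of_nonneg_ae hG0' hGm.aestronglyMeasurable]
  set IF := ∫⁻ x, ENNReal.ofReal (F x) ∂μ with hIF
  set IG := ∫⁻ x, ENNReal.ofReal (G x) ∂μ with hIG
  have hIFne : IF ≠ ⊤ := (Integrable.lintegral_lt_top hFi.1).ne
  have hIGne : IG ≠ ⊤ := (Integrable.lintegral_lt_top hGi.1).ne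
  have hconj : Real.HolderConjugate (1/r) (1/(1-r)) := by
    constructor
    · rw [one_div, inv_inv, one_div, inv_inv, inv_one]; ring
    · positivity
    · exact one_div_pos.2 (by linarith)
  have holder := ENNReal.lintegral_mul_le_Lp_mul_Lq μ hconj
    ((hFm.ennreal_ofReal.pow measurable_const).aemeasurable)
    ((hGm.ennreal_ofReal.pow measurable_const).aemeasurable)
    (f := fun x => ENNReal.ofReal (F x) ^ r) (g := fun x => ENNReal.ofReal (G x) ^ (1-r))
  have hfr : ∀ x : ℝ, (ENNReal.ofReal (F x) ^ r) ^ (1/r : ℝ) = ENNReal.ofReal (F x) := by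
    intro x
    rw [← ENNReal.rpow_mul, mul_one_div, div_self hr0.ne', ENNReal.rpow_one]
  have hgr : ∀ x : ℝ, (ENNReal.ofReal (G x) ^ (1-r)) ^ (1/(1-r) : ℝ) = ENNReal.ofReal (G x) := by
    intro x
    rw [← ENNReal.rpow_mul, mul_one_div, div_self (by linarith : (1:ℝ)-r ≠ 0), ENNReal.rpow_one]
  simp only [Pi.mul_apply, hfr, hgr] at holder
  have h1r : (1:ℝ) / (1/r) = r := by rw [one_div_one_div]
  have h1r' : (1:ℝ) / (1/(1-r)) = 1-r := by rw [one_div_one_div]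
  rw [h1r, h1r'] at holder
  have hcong : (∫⁻ x, ENNReal.ofReal (F x ^ r * G x ^ (1-r)) ∂μ) =
      ∫⁻ x, ENNReal.ofReal (F x) ^ r * ENNReal.ofReal (G x) ^ (1-r) ∂μ := by
    apply lintegral_congr_ae
    filter_upwards [hF0', hG0'] with x hF hG
    rw [ENNReal.ofReal_mul (Real.rpow_nonneg hF _),
      ENNReal.ofReal_rpow_of_nonneg hF hr0.le,
      ENNReal.ofReal_rpow_of_nonneg hG (by linarith)]
  have hle : (∫⁻ x, ENNReal.ofReal (F x ^ r * G x ^ (1-r)) ∂μ) ≤ IF ^ r * IG ^ (1-r) := by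
    rw [hcong]; exact holder
  have hRHSne : IF ^ r * IG ^ (1-r) ≠ ⊤ :=
    ENNReal.mul_ne_top (ENNReal.rpow_ne_top_of_nonneg hr0.le hIFne)
      (ENNReal.rpow_ne_top_of_nonneg (by linarith) hIGne)
  calc (∫⁻ x, ENNReal.ofReal (F x ^ r * G x ^ (1-r)) ∂μ).toReal
      ≤ (IF ^ r * IG ^ (1-r)).toReal := ENNReal.toReal_le_toReal (by
          exact ne_top_of_le_ne_top hRHSne hle) hRHSne |>.mpr hle
    _ = IF.toReal ^ r * IG.toReal ^ (1-r) := by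
        rw [ENNReal.toReal_mul, ENNReal.toReal_rpow, ENNReal.toReal_rpow]

private lemma wcont (α : ℝ) (hα : 0 ≤ α) : Continuous fun x : ℝ => (1-x) ^ α :=
  (continuous_const.sub continuous_id).rpow_const (fun _ => Or.inr hα)

private lemma wint (s : ℝ) (hs : -1 < s) :
    IntervalIntegrable (fun x : ℝ => (1-x) ^ s) volume (-1) 1 := by
  have h := (intervalIntegral.intervalIntegrable_rpow' hs (a := (0:ℝ)) (b := 2)).comp_sub_left 1
  norm_num at h
  exact h.symm

private lemma wval (s : ℝ) (hs : -1 < s) :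
    ∫ x in (-1:ℝ)..1, (1-x) ^ s = 2 ^ (s+1) / (s+1) := by
  rw [intervalIntegral.integral_comp_sub_left (fun u => u ^ s) 1]
  norm_num
  rw [integral_rpow (Or.inl hs)]
  rw [Real.zero_rpow (by linarith : s + 1 ≠ 0)]
  ring

private lemma ibp (Q : Polynomial ℝ) (α : ℝ) (hα : 0 < α)
    (hQ0 : ∀ x ∈ Set.Icc (-1:ℝ) 1, 0 ≤ Q.eval x) :
    ∫ x in (-1:ℝ)..1, (derivative Q).eval x * (1-x) ^ α ≤
      α * ∫ x in (-1:ℝ)..1, Q.eval x * (1-x) ^ (α - 1) := by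
  set F := fun x : ℝ => Q.eval x * (1-x) ^ α with hF
  set f' := fun x : ℝ => (derivative Q).eval x * (1-x) ^ α -
    α * (Q.eval x * (1-x) ^ (α - 1)) with hf'
  have h11 : (-1:ℝ) ≤ 1 := by norm_num
  have hcont : ContinuousOn F (Set.Icc (-1:ℝ) 1) :=
    (Q.continuous_aeval.mul (wcont α hα.le)).continuousOn
  have hint1 : IntervalIntegrable (fun x => (derivative Q).eval x * (1-x) ^ α)
      volume (-1) 1 :=
    ((derivative Q).continuous_aeval.mul (wcont α hα.le)).intervalIntegrable _ _
  have hint2 : IntervalIntegrable (fun x => Q.eval x * (1-x) ^ (α-1)) volume (-1) 1 :=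
    (wint (α-1) (by linarith)).continuousOn_mul Q.continuous_aeval.continuousOn
  have hint : IntervalIntegrable f' volume (-1) 1 := hint1.sub (hint2.const_mul α)
  have hderiv : ∀ x ∈ Set.Ioo (-1:ℝ) 1, HasDerivWithinAt F (f' x) (Set.Ioi x) x := by
    intro x hx
    have h1x : (0:ℝ) < 1 - x := by linarith [hx.2]
    have hw : HasDerivAt (fun y : ℝ => (1-y) ^ α) (α * (1-x) ^ (α-1) * (-1)) x := by
      have houter : HasDerivAt (fun t : ℝ => t ^ α) (α * (1-x) ^ (α-1)) (1-x) :=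
        Real.hasDerivAt_rpow_const (Or.inl h1x.ne')
      have hinner : HasDerivAt (fun y : ℝ => 1 - y) (-1) x := by
        simpa using (hasDerivAt_id x).const_sub 1
      simpa [Function.comp_def] using houter.comp x hinner
    have := (Q.hasDerivAt x).mul hw
    have heq : (derivative Q).eval x * (1-x) ^ α + Q.eval x * (α * (1-x) ^ (α-1) * (-1)) =
        f' x := by rw [hf']; ring
    exact (heq ▸ this).hasDerivWithinAt
  have key := intervalIntegral.integral_eq_sub_of_hasDeriv_right_of_le h11 hcont hderiv hint
  have hF1 : F 1 = 0 := by
    rw [hF]; simp [Real.zero_rpow hα.ne']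
  have hFm1 : 0 ≤ F (-1) := by
    rw [hF]
    exact mul_nonneg (hQ0 (-1) (by norm_num)) (Real.rpow_nonneg (by norm_num) _)
  have hsplit : (∫ x in (-1:ℝ)..1, f' x) =
      (∫ x in (-1:ℝ)..1, (derivative Q).eval x * (1-x) ^ α) -
      α * ∫ x in (-1:ℝ)..1, Q.eval x * (1-x) ^ (α-1) := by
    rw [hf', intervalIntegral.integral_sub hint1 (hint2.const_mul α),
      intervalIntegral.integral_const_mul]
  rw [hsplit] at key
  rw [hF1] at key
  linarith [key, hFm1]


/-- The `L_q` quasinorm of `f` on `[a,b]` for `0 < q < ∞`. -/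
noncomputable def LqNorm (f : ℝ → ℝ) (q a b : ℝ) : ℝ :=
  (∫ x in a..b, |f x| ^ q) ^ (1 / q)

/-- The sup norm of `f` on `[a,b]`. -/
noncomputable def LinfNorm (f : ℝ → ℝ) (a b : ℝ) : ℝ :=
  sSup ((fun x => |f x|) '' Set.Icc a b)

/-- The `L_q` norm on `[a,b]` for `0 < q ≤ ∞`, `q : ℝ≥0∞`. -/
noncomputable def Lnorm (f : ℝ → ℝ) (q : ENNReal) (a b : ℝ) : ℝ :=
  if q = ⊤ then LinfNorm f a b else LqNorm f q.toReal a b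

/-- `P ∈ Δ_n^(k)`: a real polynomial of degree at most `n` all of whose derivatives of
order `0 ≤ m ≤ k` are nonnegative on `[-1,1]`. -/
def AbsMono (P : Polynomial ℝ) (n k : ℕ) : Prop :=
  P.natDegree ≤ n ∧
    ∀ m ≤ k, ∀ x ∈ Set.Icc (-1 : ℝ) 1, 0 ≤ (derivative^[m] P).eval x

/-- Constrained Markov–Nikolskii inequality, case `l < 1/q - 1/p`. -/
theorem stmt2 (p q : ℝ) (hp : 0 < p) (hq : 0 < q) (k l : ℕ) (hlk : l ≤ k)
    (hl : (l : ℝ) < 1 / q - 1 / p) :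
    ∃ C : ℝ, 0 < C ∧ ∀ n : ℕ, k ≤ n → ∀ P : Polynomial ℝ, AbsMono P n k →
      LqNorm (fun x => (derivative^[l] P).eval x) q (-1) 1 ≤
        C * LqNorm (fun x => P.eval x) p (-1) 1 := by
  rcases Nat.eq_zero_or_pos l with hl0 | hlpos
  · -- case l = 0 : plain Hölder
    subst hl0
    have hqp : q < p := by
      have h1 : 1/p < 1/q := by push_cast at hl; linarith
      exact lt_of_one_div_lt_one_div hp h1
    refine ⟨2 ^ (1/q - 1/p), by positivity, ?_⟩
    intro n hn P hPa
    simp only [Function.iterate_zero, id_eq, LqNorm]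
    set Ip := ∫ t in (-1:ℝ)..1, |P.eval t| ^ p with hIp
    set Jq := ∫ t in (-1:ℝ)..1, |P.eval t| ^ q with hJq
    have hIp0 : 0 ≤ Ip := intervalIntegral.integral_nonneg (by norm_num)
      (fun t _ => Real.rpow_nonneg (abs_nonneg _) p)
    have hJq0 : 0 ≤ Jq := intervalIntegral.integral_nonneg (by norm_num)
      (fun t _ => Real.rpow_nonneg (abs_nonneg _) q)
    have hr0 : 0 < q/p := by positivity
    have hr1 : q/p < 1 := (div_lt_one hp).2 hqp
    have hmF : Measurable fun x => |P.eval x| ^ p :=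
      (P.continuous_aeval.measurable.abs).pow measurable_const
    have key := rev_holder (fun x => |P.eval x| ^ p) (fun _ => (1:ℝ)) (q/p) hr0 hr1
      hmF measurable_const
      (fun x _ => Real.rpow_nonneg (abs_nonneg _) _) (fun x _ => zero_le_one)
      ((rpow_cont _ P.continuous_aeval p hp.le).intervalIntegrable _ _)
      intervalIntegrable_const
    have hsimp : ∀ x : ℝ, (|P.eval x| ^ p) ^ (q/p : ℝ) * (1:ℝ) ^ (1 - q/p : ℝ)
        = |P.eval x| ^ q := by
      intro x
      rw [Real.one_rpow, mul_one, ← Real.rpow_mul (abs_nonneg _)]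
      congr 1
      field_simp
    simp only [hsimp] at key
    have hG : (∫ _ in (-1:ℝ)..1, (1:ℝ)) = 2 := by norm_num
    rw [hG] at key
    -- key : Jq ≤ Ip ^ (q/p) * 2 ^ (1 - q/p)
    have h2 : Jq ^ (1/q) ≤ (Ip ^ (q/p : ℝ) * 2 ^ (1 - q/p : ℝ)) ^ (1/q : ℝ) :=
      Real.rpow_le_rpow hJq0 key (by positivity)
    calc Jq ^ (1/q) ≤ (Ip ^ (q/p : ℝ) * 2 ^ (1 - q/p : ℝ)) ^ (1/q : ℝ) := h2
      _ = 2 ^ (1/q - 1/p) * Ip ^ (1/p) := by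
          rw [Real.mul_rpow (Real.rpow_nonneg hIp0 _) (by positivity),
            ← Real.rpow_mul hIp0, ← Real.rpow_mul (by norm_num : (0:ℝ) ≤ 2),
            show (q/p)*(1/q) = 1/p by field_simp,
            show (1-q/p)*(1/q) = 1/q - 1/p by field_simp]
          ring
  · -- case 1 ≤ l
    have hl1 : 1 ≤ l := hlpos
    have hlc : (1:ℝ) ≤ (l:ℝ) := by exact_mod_cast hl1
    have hp1 : 0 < 1/p := by positivity
    have hinvq : 1 < 1/q := by linarith
    have hq1 : q < 1 := by
      have h := mul_lt_mul_of_pos_left hinvq hq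
      rw [mul_one, mul_one_div, div_self hq.ne'] at h
      exact h
    have h1q0 : 0 < 1 - q := by linarith
    obtain ⟨c, hc, hcP⟩ := ptwise p hp (l-1)
    set b : ℝ := ((l-1 : ℕ):ℝ) + 1/p with hb
    have hbcast : ((l-1:ℕ):ℝ) = (l:ℝ) - 1 := by
      rw [Nat.cast_sub hl1]; norm_num
    have hb_lt : b < 1/q - 1 := by rw [hb, hbcast]; linarith
    have hb_pos : 0 < b := by
      rw [hb, hbcast]; linarith
    set α : ℝ := (b + (1/q - 1))/2 with hα
    have hbα : b < α := by rw [hα]; linarith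
    have hα1 : α < 1/q - 1 := by rw [hα]; linarith
    have hα0 : 0 < α := lt_trans hb_pos hbα
    set s : ℝ := α*q/(1-q) with hs
    have hs0 : 0 < s := by rw [hs]; positivity
    have hs1 : s < 1 := by
      rw [hs, div_lt_one h1q0]
      nlinarith [mul_lt_mul_of_pos_right hα1 hq, mul_one_div_cancel hq.ne']
    set Kβ : ℝ := 2 ^ (α - b) / (α - b) with hKβ
    have hKβval : (∫ x in (-1:ℝ)..1, (1-x) ^ (α-1-b)) = Kβ := by
      rw [wval (α-1-b) (by linarith), hKβ, show α-1-b+1 = α-b by ring]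
    have hKβ0 : 0 < Kβ := by
      rw [hKβ]
      exact div_pos (Real.rpow_pos_of_pos two_pos _) (by linarith)
    set K : ℝ := 2 ^ (1-s) / (1-s) with hK
    have hKval : (∫ x in (-1:ℝ)..1, (1-x) ^ (-s)) = K := by
      rw [wval (-s) (by linarith), hK, show -s+1 = 1-s by ring]
    have hK0 : 0 < K := by
      rw [hK]
      exact div_pos (Real.rpow_pos_of_pos two_pos _) (by linarith)
    refine ⟨(α * c * Kβ) * K ^ ((1-q)/q),
      mul_pos (mul_pos (mul_pos hα0 hc) hKβ0) (Real.rpow_pos_of_pos hK0 _), ?_⟩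
    intro n hn P hPa
    obtain ⟨hdeg, hP⟩ := hPa
    simp only [LqNorm]
    set N : ℝ := (∫ t in (-1:ℝ)..1, |P.eval t| ^ p) ^ (1/p : ℝ) with hN
    have hN0 : 0 ≤ N := Real.rpow_nonneg (intervalIntegral.integral_nonneg (by norm_num)
      (fun t _ => Real.rpow_nonneg (abs_nonneg _) p)) _
    have hfl0 : ∀ x ∈ Set.Icc (-1:ℝ) 1, 0 ≤ (derivative^[l] P).eval x := hP l hlk
    -- the weighted integral bound (IBP + pointwise bound)
    have hQderiv : derivative (derivative^[l-1] P) = derivative^[l] P := by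
      rw [← Function.iterate_succ_apply' derivative]
      congr 1
      omega
    have hQ0 : ∀ x ∈ Set.Icc (-1:ℝ) 1, 0 ≤ (derivative^[l-1] P).eval x :=
      hP (l-1) (le_trans (Nat.sub_le l 1) hlk)
    have hIBP : (∫ x in (-1:ℝ)..1, (derivative^[l] P).eval x * (1-x) ^ α) ≤
        α * ∫ x in (-1:ℝ)..1, (derivative^[l-1] P).eval x * (1-x) ^ (α-1) := by
      have h := ibp (derivative^[l-1] P) α hα0 hQ0
      rw [hQderiv] at h
      exact h
    have hptw := hcP k (by omega) P hP
    have hmid : (∫ x in (-1:ℝ)..1, (derivative^[l-1] P).eval x * (1-x) ^ (α-1)) ≤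
        c * N * Kβ := by
      have hint1 : IntervalIntegrable
          (fun x => (derivative^[l-1] P).eval x * (1-x) ^ (α-1)) volume (-1) 1 :=
        (wint (α-1) (by linarith)).continuousOn_mul
          (derivative^[l-1] P).continuous_aeval.continuousOn
      have hint2 : IntervalIntegrable (fun x => c * N * (1-x) ^ (α-1-b)) volume (-1) 1 :=
        (wint (α-1-b) (by linarith)).const_mul _
      have hae : (fun x => (derivative^[l-1] P).eval x * (1-x) ^ (α-1)) ≤ᵐ[volume.restrict
          (Set.Icc (-1:ℝ) 1)] fun x => c * N * (1-x) ^ (α-1-b) := by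
        have h1 : ∀ᵐ x : ℝ ∂volume, x ≠ (1:ℝ) := by
          have hset : {x : ℝ | ¬ x ≠ 1} = {1} := by ext y; simp
          rw [MeasureTheory.ae_iff, hset]
          exact measure_singleton 1
        have h2 : ∀ᵐ x : ℝ ∂(volume.restrict (Set.Icc (-1:ℝ) 1)), x ∈ Set.Icc (-1:ℝ) 1 :=
          ae_restrict_mem measurableSet_Icc
        filter_upwards [ae_restrict_of_ae h1, h2] with x hx1 hxI
        have hxlt : x < 1 := lt_of_le_of_ne hxI.2 hx1
        have h1x : (0:ℝ) < 1 - x := by linarith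
        have hsplit : (1-x) ^ (α-1) = (1-x) ^ b * (1-x) ^ (α-1-b) := by
          rw [← Real.rpow_add h1x, show b + (α-1-b) = α-1 by ring]
        rw [hsplit, ← mul_assoc]
        exact mul_le_mul_of_nonneg_right (hptw x hxI) (Real.rpow_nonneg h1x.le _)
      have := intervalIntegral.integral_mono_ae_restrict (by norm_num : (-1:ℝ) ≤ 1)
        hint1 hint2 hae
      calc (∫ x in (-1:ℝ)..1, (derivative^[l-1] P).eval x * (1-x) ^ (α-1))
          ≤ ∫ x in (-1:ℝ)..1, c * N * (1-x) ^ (α-1-b) := this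
        _ = c * N * ∫ x in (-1:ℝ)..1, (1-x) ^ (α-1-b) := by
            rw [intervalIntegral.integral_const_mul]
        _ = c * N * Kβ := by rw [hKβval]
    -- Hölder
    have hFm : Measurable fun x : ℝ => (derivative^[l] P).eval x * (1-x) ^ α :=
      ((derivative^[l] P).continuous_aeval.mul (wcont α hα0.le)).measurable
    have hGm : Measurable fun x : ℝ => (1-x) ^ (-s) :=
      (measurable_const.sub measurable_id).pow measurable_const
    have holder := rev_holder (fun x => (derivative^[l] P).eval x * (1-x) ^ α)
      (fun x => (1-x) ^ (-s)) q hq hq1 hFm hGm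
      (fun x hx => mul_nonneg (hfl0 x ⟨hx.1.le, hx.2⟩)
        (Real.rpow_nonneg (by linarith [hx.2]) _))
      (fun x hx => Real.rpow_nonneg (by linarith [hx.2]) _)
      (((derivative^[l] P).continuous_aeval.mul (wcont α hα0.le)).intervalIntegrable _ _)
      (wint (-s) (by linarith))
    rw [hKval] at holder
    -- identify the integrand
    have hcong : (∫ x in (-1:ℝ)..1, |(derivative^[l] P).eval x| ^ q) =
        ∫ x in (-1:ℝ)..1, ((derivative^[l] P).eval x * (1-x) ^ α) ^ q * ((1-x) ^ (-s)) ^ (1-q) := by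
      apply intervalIntegral.integral_congr_ae
      have h1 : ∀ᵐ x : ℝ ∂volume, x ≠ (1:ℝ) := by
        have hset : {x : ℝ | ¬ x ≠ 1} = {1} := by ext y; simp
        rw [MeasureTheory.ae_iff, hset]
        exact measure_singleton 1
      filter_upwards [h1] with x hx1 hmem
      rw [Set.uIoc_of_le (by norm_num : (-1:ℝ) ≤ 1)] at hmem
      have hxI : x ∈ Set.Icc (-1:ℝ) 1 := ⟨hmem.1.le, hmem.2⟩
      have hxlt : x < 1 := lt_of_le_of_ne hmem.2 hx1
      have h1x : (0:ℝ) < 1 - x := by linarith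
      rw [Real.mul_rpow (hfl0 x hxI) (Real.rpow_nonneg h1x.le _),
        ← Real.rpow_mul h1x.le, ← Real.rpow_mul h1x.le,
        show -s*(1-q) = -(α*q) by rw [hs]; field_simp,
        mul_assoc, ← Real.rpow_add h1x, add_neg_cancel, Real.rpow_zero, mul_one,
        abs_of_nonneg (hfl0 x hxI)]
    rw [hcong]
    -- combine
    have hIF0 : 0 ≤ ∫ x in (-1:ℝ)..1, (derivative^[l] P).eval x * (1-x) ^ α :=
      intervalIntegral.integral_nonneg (by norm_num)
        (fun x hx => mul_nonneg (hfl0 x hx) (Real.rpow_nonneg (by linarith [hx.2]) _))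
    have hIFle : (∫ x in (-1:ℝ)..1, (derivative^[l] P).eval x * (1-x) ^ α) ≤
        α * (c * N * Kβ) := hIBP.trans (mul_le_mul_of_nonneg_left hmid hα0.le)
    have hR0 : 0 ≤ α * (c * N * Kβ) := by positivity
    have hstep : (∫ x in (-1:ℝ)..1, ((derivative^[l] P).eval x * (1-x) ^ α) ^ q *
        ((1-x) ^ (-s)) ^ (1-q)) ≤ (α * (c * N * Kβ)) ^ q * K ^ (1-q) :=
      holder.trans (mul_le_mul_of_nonneg_right (Real.rpow_le_rpow hIF0 hIFle hq.le)
        (Real.rpow_nonneg hK0.le _))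
    have hJ0 : 0 ≤ ∫ x in (-1:ℝ)..1, ((derivative^[l] P).eval x * (1-x) ^ α) ^ q *
        ((1-x) ^ (-s)) ^ (1-q) := by
      apply intervalIntegral.integral_nonneg (by norm_num)
      intro x hx
      exact mul_nonneg (Real.rpow_nonneg (mul_nonneg (hfl0 x hx)
        (Real.rpow_nonneg (by linarith [hx.2]) _)) _)
        (Real.rpow_nonneg (Real.rpow_nonneg (by linarith [hx.2]) _) _)
    calc (∫ x in (-1:ℝ)..1, ((derivative^[l] P).eval x * (1-x) ^ α) ^ q *
          ((1-x) ^ (-s)) ^ (1-q)) ^ (1/q)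
        ≤ ((α * (c * N * Kβ)) ^ q * K ^ (1-q)) ^ (1/q) :=
          Real.rpow_le_rpow hJ0 hstep (by positivity)
      _ = (α * (c * N * Kβ)) * K ^ ((1-q)/q) := by
          rw [Real.mul_rpow (Real.rpow_nonneg hR0 _) (Real.rpow_nonneg hK0.le _),
            ← Real.rpow_mul hR0, ← Real.rpow_mul hK0.le,
            mul_one_div, div_self hq.ne', Real.rpow_one, mul_one_div]
      _ = α * c * Kβ * K ^ ((1-q)/q) * N := by ring
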